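/- Let V₁, V₂, V₃, V₄ be points on the unit sphere in ℝ³ and, for each pair 1 ≤ i < j ≤ 4, let v_{ij} be a point on the unit sphere. Define L² = ∑_{1 ≤ i < j ≤ 4} (‖V_i − V_j‖² + ‖v_{ij} − V_i‖² + ‖v_{ij} − V_j‖²). Then L² ≤ 40 + 8√3. -/

import Mathlib

private lemma keyA_stmt5 (a b w : EuclideanSpace ℝ (Fin 3))
    (ha : ‖a‖ = 1) (hb : ‖b‖ = 1) (hw : ‖w‖ = 1) :
    ‖a - b‖ ^ 2 + ‖w - a‖ ^ 2 + ‖w - b‖ ^ 2 ≤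
      6 + 5 * Real.sqrt 3 / 3 + (Real.sqrt 3 - 2) * (inner ℝ a b : ℝ) := by
  have e1 : ‖a - b‖ ^ 2 = 2 - 2 * (inner ℝ a b : ℝ) := by
    rw [norm_sub_sq_real, ha, hb]; ring
  have e2 : ‖w - a‖ ^ 2 = 2 - 2 * (inner ℝ w a : ℝ) := by
    rw [norm_sub_sq_real, ha, hw]; ring
  have e3 : ‖w - b‖ ^ 2 = 2 - 2 * (inner ℝ w b : ℝ) := by
    rw [norm_sub_sq_real, hb, hw]; ring
  set t : ℝ := inner ℝ a b with ht
  have hn2 : ‖a + b‖ ^ 2 = 2 + 2 * t := by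
    rw [norm_add_sq_real, ha, hb, ht]; ring
  have hn : (0:ℝ) ≤ ‖a + b‖ := norm_nonneg _
  have hwab : -(‖a + b‖) ≤ (inner ℝ w (a + b) : ℝ) := by
    have := abs_real_inner_le_norm w (a + b)
    rw [hw, one_mul] at this
    linarith [neg_abs_le (inner ℝ w (a+b) : ℝ), abs_nonneg (inner ℝ w (a+b) : ℝ), this]
  have hsplit : (inner ℝ w (a + b) : ℝ) = (inner ℝ w a : ℝ) + (inner ℝ w b : ℝ) :=
    inner_add_right w a b
  have hs2 : Real.sqrt 3 ^ 2 = 3 := Real.sq_sqrt (by norm_num)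
  have hs : (1:ℝ) ≤ Real.sqrt 3 := by nlinarith [Real.sqrt_nonneg 3]
  have ht1 : -1 ≤ t := by nlinarith
  have hX : (0:ℝ) ≤ Real.sqrt 3 * t + 5 * Real.sqrt 3 / 3 := by nlinarith
  have h4 : (2 * ‖a + b‖) ^ 2 ≤ (Real.sqrt 3 * t + 5 * Real.sqrt 3 / 3) ^ 2 := by
    nlinarith [sq_nonneg (t + 1/3), sq_nonneg t, hs2, hn2]
  have key : 2 * ‖a + b‖ ≤ Real.sqrt 3 * t + 5 * Real.sqrt 3 / 3 := by
    nlinarith [h4, hX, hn]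
  rw [e1, e2, e3]
  linarith [hwab, hsplit, key]

private lemma keyB_stmt5 (V : Fin 4 → EuclideanSpace ℝ (Fin 3)) (hV : ∀ i, ‖V i‖ = 1) :
    (-2 : ℝ) ≤ (inner ℝ (V 0) (V 1) : ℝ) + inner ℝ (V 0) (V 2) + inner ℝ (V 0) (V 3)
      + inner ℝ (V 1) (V 2) + inner ℝ (V 1) (V 3) + inner ℝ (V 2) (V 3) := by
  have h : (0:ℝ) ≤ ‖V 0 + V 1 + V 2 + V 3‖ ^ 2 := sq_nonneg _
  have e : ‖V 0 + V 1 + V 2 + V 3‖ ^ 2 =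
      (inner ℝ (V 0 + V 1 + V 2 + V 3) (V 0 + V 1 + V 2 + V 3) : ℝ) :=
    (real_inner_self_eq_norm_sq _).symm
  simp only [inner_add_left, inner_add_right] at e
  have hii : ∀ i, (inner ℝ (V i) (V i) : ℝ) = 1 := fun i => by
    rw [real_inner_self_eq_norm_sq, hV i]; norm_num
  rw [e] at h
  rw [hii 0, hii 1, hii 2, hii 3] at h
  linarith [h, real_inner_comm (V 1) (V 0), real_inner_comm (V 2) (V 0),
    real_inner_comm (V 3) (V 0), real_inner_comm (V 2) (V 1),
    real_inner_comm (V 3) (V 1), real_inner_comm (V 3) (V 2)]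

set_option maxHeartbeats 1000000

/-- Lemma: for a "tetrahedron with adjoined triangles" inscribed in the unit sphere,
the sum of the squared edge lengths is at most `40 + 8√3`. -/
theorem stmt5 (V : Fin 4 → EuclideanSpace ℝ (Fin 3))
    (v : Fin 4 → Fin 4 → EuclideanSpace ℝ (Fin 3))
    (hV : ∀ i, ‖V i‖ = 1) (hv : ∀ i j, i < j → ‖v i j‖ = 1) :
    (∑ i : Fin 4, ∑ j : Fin 4, if i < j then
        ‖V i - V j‖ ^ 2 + ‖v i j - V i‖ ^ 2 + ‖v i j - V j‖ ^ 2 else 0) ≤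
      40 + 8 * Real.sqrt 3 := by
  have h01 := keyA_stmt5 (V 0) (V 1) (v 0 1) (hV 0) (hV 1) (hv 0 1 (by decide))
  have h02 := keyA_stmt5 (V 0) (V 2) (v 0 2) (hV 0) (hV 2) (hv 0 2 (by decide))
  have h03 := keyA_stmt5 (V 0) (V 3) (v 0 3) (hV 0) (hV 3) (hv 0 3 (by decide))
  have h12 := keyA_stmt5 (V 1) (V 2) (v 1 2) (hV 1) (hV 2) (hv 1 2 (by decide))
  have h13 := keyA_stmt5 (V 1) (V 3) (v 1 3) (hV 1) (hV 3) (hv 1 3 (by decide))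
  have h23 := keyA_stmt5 (V 2) (V 3) (v 2 3) (hV 2) (hV 3) (hv 2 3 (by decide))
  have hB := keyB_stmt5 V hV
  have hs2 : Real.sqrt 3 ^ 2 = 3 := Real.sq_sqrt (by norm_num)
  have hs : (0:ℝ) ≤ Real.sqrt 3 := Real.sqrt_nonneg 3
  have hsle : Real.sqrt 3 ≤ 2 := by nlinarith
  have hprod := mul_le_mul_of_nonpos_left hB (by linarith : Real.sqrt 3 - 2 ≤ 0)
  simp only [Fin.sum_univ_four, show (((0:Fin 4) < 0) = False) from by decide, show (((0:Fin 4) < 1) = True) from by decide, show (((0:Fin 4) < 2) = True) from by decide, show (((0:Fin 4) < 3) = True) from by decide, show (((1:Fin 4) < 0) = False) from by decide, show (((1:Fin 4) < 1) = False) from by decide, show (((1:Fin 4) < 2) = True) from by decide, show (((1:Fin 4) < 3) = True) from by decide, show (((2:Fin 4) < 0) = False) from by decide, show (((2:Fin 4) < 1) = False) from by decide, show (((2:Fin 4) < 2) = False) from by decide, show (((2:Fin 4) < 3) = True) from by decide, show (((3:Fin 4) < 0) = False) from by decide, show (((3:Fin 4) < 1) = False) from by decide, show (((3:Fin 4) <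 2) = False) from by decide, show (((3:Fin 4) < 3) = False) from by decide, if_true, if_false]
  linarith [h01, h02, h03, h12, h13, h23, hprod]
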